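/- Let X and Y be compact Hausdorff smooth manifolds without boundary modeled on finite-dimensional Euclidean spaces, and let Ψ : C^∞(X, ℝ) → C^∞(Y, ℝ) be an ℝ-algebra isomorphism. Then there exists a unique diffeomorphism ψ : Y → X such that Ψ(f) = f ∘ ψ for all f ∈ C^∞(X, ℝ). -/

import Mathlib

open Manifold Set Function

namespace MilnorAux

variable {n : ℕ} {M : Type*} [TopologicalSpace M]
  [ChartedSpace (EuclideanSpace ℝ (Fin n)) M]
  [IsManifold (𝓡 n) (⊤ : ℕ∞) M] [T2Space M] [CompactSpace M]

/-- Smooth functions separate points. -/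
theorem eq_of_forall_smooth_eq {x x' : M}
    (h : ∀ f : C^(⊤ : ℕ∞)⟮𝓡 n, M; ℝ⟯, f x = f x') : x = x' := by
  by_contra hne
  obtain ⟨f, h0, h1, -⟩ := exists_contMDiffMap_zero_one_of_isClosed (𝓡 n) (n := (⊤ : ℕ∞))
    (isClosed_singleton (x := x)) (isClosed_singleton (x := x'))
    (by simpa using hne)
  have := h f
  rw [h0 rfl, h1 rfl] at this
  simpa using this

/-- Evaluation at a point as an `ℝ`-algebra homomorphism. -/
noncomputable def evalAlgHom (x : M) : C^(⊤ : ℕ∞)⟮𝓡 n, M; ℝ⟯ →ₐ[ℝ] ℝ :=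
  (Pi.evalAlgHom ℝ (fun _ => ℝ) x).comp ContMDiffMap.coeFnAlgHom

@[simp] theorem evalAlgHom_apply (x : M) (f : C^(⊤ : ℕ∞)⟮𝓡 n, M; ℝ⟯) :
    evalAlgHom x f = f x := rfl

/-- Every character of the algebra of smooth functions is a point evaluation. -/
theorem exists_eval (φ : C^(⊤ : ℕ∞)⟮𝓡 n, M; ℝ⟯ →ₐ[ℝ] ℝ) :
    ∃ x : M, ∀ f, φ f = f x := by
  by_contra h
  push_neg at h
  choose F hF using h
  set g : M → C^(⊤ : ℕ∞)⟮𝓡 n, M; ℝ⟯ :=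
    fun x => F x - algebraMap ℝ _ (φ (F x)) with hg
  have hφg : ∀ x, φ (g x) = 0 := by
    intro x
    simp [hg, map_sub, AlgHom.commutes]
  have hgx : ∀ x : M, g x x ≠ 0 := by
    intro x hx
    apply hF x
    have : g x x = F x x - φ (F x) := rfl
    rw [this, sub_eq_zero] at hx
    exact hx.symm
  obtain ⟨t, ht⟩ := IsCompact.elim_finite_subcover (isCompact_univ (X := M))
    (fun x : M => {z | g x z ≠ 0})
    (fun x => isOpen_compl_singleton.preimage (g x).contMDiff.continuous)
    (fun z _ => mem_iUnion.2 ⟨z, hgx z⟩)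
  set h : C^(⊤ : ℕ∞)⟮𝓡 n, M; ℝ⟯ := ∑ x ∈ t, g x * g x with hh
  have hφh : φ h = 0 := by
    rw [hh, map_sum]
    exact Finset.sum_eq_zero fun x _ => by rw [map_mul, hφg x, mul_zero]
  have hhz : ∀ z : M, h z ≠ 0 := by
    intro z
    have hz : h z = ∑ x ∈ t, g x z * g x z := by
      have h0 := map_sum (evalAlgHom z) (fun x => g x * g x) t
      simp only [evalAlgHom_apply, map_mul] at h0
      rw [hh]
      exact h0
    rw [hz]
    obtain ⟨x, hxt, hx⟩ := mem_iUnion₂.1 (ht (mem_univ z))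
    have hpos : 0 < ∑ x ∈ t, g x z * g x z :=
      Finset.sum_pos' (fun i _ => mul_self_nonneg _)
        ⟨x, hxt, mul_self_pos.2 hx⟩
    exact ne_of_gt hpos
  set hinv : C^(⊤ : ℕ∞)⟮𝓡 n, M; ℝ⟯ := ⟨fun z => (h z)⁻¹, h.contMDiff.inv₀ hhz⟩ with hhinv
  have hone : h * hinv = 1 := by
    ext z
    exact mul_inv_cancel₀ (hhz z)
  have := congrArg φ hone
  rw [map_mul, hφh, zero_mul, map_one] at this
  exact zero_ne_one this

/-- A map whose compositions with all smooth functions are smooth is smooth. -/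
theorem contMDiff_of_comp {m : ℕ} {Y : Type*} [TopologicalSpace Y]
    [ChartedSpace (EuclideanSpace ℝ (Fin m)) Y] [IsManifold (𝓡 m) (⊤ : ℕ∞) Y]
    (p : Y → M)
    (hp : ∀ f : C^(⊤ : ℕ∞)⟮𝓡 n, M; ℝ⟯, ContMDiff (𝓡 m) 𝓘(ℝ, ℝ) (⊤ : ℕ∞) (⇑f ∘ p)) :
    ContMDiff (𝓡 m) (𝓡 n) (⊤ : ℕ∞) p := by
  have key : ∀ (N : ℕ) (g : M → EuclideanSpace ℝ (Fin N)), ContMDiff (𝓡 n) (𝓡 N) (⊤ : ℕ∞) g →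
      ContMDiff (𝓡 m) (𝓡 N) (⊤ : ℕ∞) (g ∘ p) := by
    intro N g hg
    have h1 : ∀ i : Fin N, ContMDiff (𝓡 m) 𝓘(ℝ, ℝ) (⊤ : ℕ∞) (fun y => g (p y) i) := by
      intro i
      exact hp ⟨⇑(EuclideanSpace.proj (𝕜 := ℝ) i) ∘ g,
        (EuclideanSpace.proj i).contMDiff.comp hg⟩
    have h2 : ContMDiff (𝓡 m) 𝓘(ℝ, Fin N → ℝ) (⊤ : ℕ∞)
        (fun y => (EuclideanSpace.equiv (Fin N) ℝ) (g (p y))) :=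
      contMDiff_pi_space.2 h1
    have h3 : ContMDiff 𝓘(ℝ, Fin N → ℝ) (𝓡 N) (⊤ : ℕ∞)
        (⇑((EuclideanSpace.equiv (Fin N) ℝ).symm.toContinuousLinearMap)) :=
      ContinuousLinearMap.contMDiff _
    have h4 : g ∘ p = ⇑((EuclideanSpace.equiv (Fin N) ℝ).symm.toContinuousLinearMap) ∘
        (fun y => (EuclideanSpace.equiv (Fin N) ℝ) (g (p y))) :=
      funext fun y => (ContinuousLinearEquiv.symm_apply_apply _ _).symm
    rw [h4]
    exact h3.comp h2
  obtain ⟨N, e, he, hemb, -⟩ := exists_embedding_euclidean_of_compact (I := 𝓡 n) (M := M)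
  have hcont : Continuous p :=
    hemb.isInducing.continuous_iff.2 (key N e he).continuous
  intro y
  set x₀ := p y with hx₀
  obtain ⟨f⟩ : Nonempty (SmoothBumpFunction (𝓡 n) x₀) := inferInstance
  set g : M → EuclideanSpace ℝ (Fin n) := fun x => f x • extChartAt (𝓡 n) x₀ x with hgdef
  have hg : ContMDiff (𝓡 n) (𝓡 n) (⊤ : ℕ∞) g :=
    f.contMDiff_smul fun x hx => (contMDiffAt_extChartAt' hx).contMDiffWithinAt
  have hgp := key n g hg
  have hmem : {x | f x = 1} ∩ (extChartAt (𝓡 n) x₀).source ∈ nhds x₀ := by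
    apply Filter.inter_mem
    · exact f.eventuallyEq_one.mono fun x hx => hx
    · exact extChartAt_source_mem_nhds x₀
  have hev : ∀ᶠ y' in nhds y, p y' ∈ {x | f x = 1} ∩ (extChartAt (𝓡 n) x₀).source :=
    hcont.continuousAt.preimage_mem_nhds hmem
  have hgx₀ : g x₀ = extChartAt (𝓡 n) x₀ x₀ := by
    rw [hgdef]; simp [f.eq_one, one_smul]
  have h1 : ContMDiffAt 𝓘(ℝ, EuclideanSpace ℝ (Fin n)) (𝓡 n) (⊤ : ℕ∞)
      (extChartAt (𝓡 n) x₀).symm (g (p y)) := by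
    rw [← hx₀, hgx₀]
    exact (contMDiffOn_extChartAt_symm x₀).contMDiffAt
      ((isOpen_extChartAt_target x₀).mem_nhds (mem_extChartAt_target x₀))
  have h2 : ContMDiffAt (𝓡 m) (𝓡 n) (⊤ : ℕ∞) ((extChartAt (𝓡 n) x₀).symm ∘ (g ∘ p)) y :=
    h1.comp y (hgp y)
  apply h2.congr_of_eventuallyEq
  filter_upwards [hev] with y' hy'
  obtain ⟨h1', h2'⟩ := hy'
  show p y' = (extChartAt (𝓡 n) x₀).symm (g (p y'))
  have hone' : (f (p y') : ℝ) = 1 := h1'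
  have hgy : g (p y') = extChartAt (𝓡 n) x₀ (p y') := by
    rw [hgdef]
    simp only [hone', one_smul]
  rw [hgy, (extChartAt (𝓡 n) x₀).left_inv h2']

end MilnorAux

/-- For compact Hausdorff smooth manifolds `X` and `Y` without boundary, modeled on
finite-dimensional Euclidean spaces, every `ℝ`-algebra isomorphism
`Ψ : C^∞(X, ℝ) → C^∞(Y, ℝ)` is given by composition with a unique diffeomorphism
`ψ : Y → X`. -/
theorem algEquiv_smooth_functions_eq_comp_diffeomorph_of_compact
    {n m : ℕ}
    {X : Type*} [TopologicalSpace X] [ChartedSpace (EuclideanSpace ℝ (Fin n)) X]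
    [IsManifold (𝓡 n) (⊤ : ℕ∞) X] [T2Space X] [CompactSpace X]
    {Y : Type*} [TopologicalSpace Y] [ChartedSpace (EuclideanSpace ℝ (Fin m)) Y]
    [IsManifold (𝓡 m) (⊤ : ℕ∞) Y] [T2Space Y] [CompactSpace Y]
    (Ψ : C^(⊤ : ℕ∞)⟮𝓡 n, X; ℝ⟯ ≃ₐ[ℝ] C^(⊤ : ℕ∞)⟮𝓡 m, Y; ℝ⟯) :
    ∃! ψ : Diffeomorph (𝓡 m) (𝓡 n) Y X (⊤ : ℕ∞), ∀ f : C^(⊤ : ℕ∞)⟮𝓡 n, X; ℝ⟯, ⇑(Ψ f) = f ∘ ψ := by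
  classical
  have hp' : ∀ y : Y, ∃ x : X, ∀ f : C^(⊤ : ℕ∞)⟮𝓡 n, X; ℝ⟯, Ψ f y = f x := fun y => by
    obtain ⟨x, hx⟩ := MilnorAux.exists_eval ((MilnorAux.evalAlgHom y).comp Ψ.toAlgHom)
    exact ⟨x, fun f => hx f⟩
  have hq' : ∀ x : X, ∃ y : Y, ∀ g : C^(⊤ : ℕ∞)⟮𝓡 m, Y; ℝ⟯, Ψ.symm g x = g y := fun x => by
    obtain ⟨y, hy⟩ := MilnorAux.exists_eval ((MilnorAux.evalAlgHom x).comp Ψ.symm.toAlgHom)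
    exact ⟨y, fun g => hy g⟩
  choose p hP using hp'
  choose q hQ using hq'
  have hqp : ∀ y, q (p y) = y := by
    intro y
    apply MilnorAux.eq_of_forall_smooth_eq (n := m) (M := Y)
    intro g
    rw [← hQ (p y) g, ← hP y (Ψ.symm g), AlgEquiv.apply_symm_apply]
  have hpq : ∀ x, p (q x) = x := by
    intro x
    apply MilnorAux.eq_of_forall_smooth_eq (n := n) (M := X)
    intro f
    rw [← hP (q x) f, ← hQ x (Ψ f), AlgEquiv.symm_apply_apply]
  have hps : ContMDiff (𝓡 m) (𝓡 n) (⊤ : ℕ∞) p := by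
    apply MilnorAux.contMDiff_of_comp
    intro f
    have : ⇑f ∘ p = ⇑(Ψ f) := funext fun y => (hP y f).symm
    rw [this]
    exact (Ψ f).contMDiff
  have hqs : ContMDiff (𝓡 n) (𝓡 m) (⊤ : ℕ∞) q := by
    apply MilnorAux.contMDiff_of_comp
    intro g
    have : ⇑g ∘ q = ⇑(Ψ.symm g) := funext fun x => (hQ x g).symm
    rw [this]
    exact (Ψ.symm g).contMDiff
  refine ⟨⟨⟨p, q, hqp, hpq⟩, hps, hqs⟩, fun f => funext fun y => hP y f, ?_⟩
  intro ψ' h'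
  apply Diffeomorph.ext
  intro y
  apply MilnorAux.eq_of_forall_smooth_eq (n := n) (M := X)
  intro f
  have h1 : Ψ f y = f (ψ' y) := by rw [h' f]; rfl
  exact h1.symm.trans (hP y f)
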